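/- In a commutative ring, for elements Ω_{αβ} and ω_α (1 ≤ α, β ≤ 2m) in an exterior-algebra-like setting where the ω_α have odd degree and the Ω_{αβ} have even degree, the sum over permutations α of S_{2m} of ε(α) (Ω_{α₁α₂} − ω_{α₁}ω_{α₂})···(Ω_{α_{2m-1}α_{2m}} − ω_{α_{2m-1}}ω_{α_{2m}}) equals the sum over k from 0 to m of binomial(m,k)·(−1)^{m−k} times the sum over permutations α of ε(α) Ω_{α₁α₂}···Ω_{α_{2k-1}α_{2k}} ω_{α_{2k+1}}···ω_{α_{2m}}. -/

import Mathlib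

open Equiv

section Helpers

variable {V : Type*} [AddCommGroup V] [Module ℝ V]

private lemma ι_mul_of_mem (v : V) {p : ℕ} {x : ExteriorAlgebra ℝ V} (hx : x ∈ ⋀[ℝ]^p V) :
    ExteriorAlgebra.ι ℝ v * x = (-1 : ExteriorAlgebra ℝ V) ^ p * (x * ExteriorAlgebra.ι ℝ v) := by
  induction hx using Submodule.pow_induction_on_left' with
  | algebraMap r => simp [Algebra.commutes]
  | add x y i hx hy ihx ihy => rw [mul_add, ihx, ihy, add_mul, mul_add]
  | mem_mul w hw i x hx ih =>
      obtain ⟨u, rfl⟩ := hw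
      have h1 : ExteriorAlgebra.ι ℝ v * ExteriorAlgebra.ι ℝ u
          = - (ExteriorAlgebra.ι ℝ u * ExteriorAlgebra.ι ℝ v) :=
        eq_neg_of_add_eq_zero_left (ExteriorAlgebra.ι_add_mul_swap v u)
      have h2 : ExteriorAlgebra.ι ℝ u * (-1 : ExteriorAlgebra ℝ V) ^ i
          = (-1) ^ i * ExteriorAlgebra.ι ℝ u :=
        (((Commute.neg_one_left (ExteriorAlgebra.ι ℝ u)).pow_left i).eq).symm
      rw [← mul_assoc, h1, neg_mul, mul_assoc, ih, ← mul_assoc, h2, pow_succ', neg_one_mul,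
        neg_mul, mul_assoc, mul_assoc]

private lemma even_mem_center {p : ℕ} (hp : Even p) {x : ExteriorAlgebra ℝ V}
    (hx : x ∈ ⋀[ℝ]^p V) : x ∈ Subalgebra.center ℝ (ExteriorAlgebra ℝ V) := by
  rw [Subalgebra.mem_center_iff]
  intro b
  induction b using ExteriorAlgebra.induction with
  | algebraMap r => exact Algebra.commutes r x
  | ι v => rw [ι_mul_of_mem v hx, hp.neg_one_pow, one_mul]
  | mul a b ha hb => rw [mul_assoc, hb, ← mul_assoc, ha, mul_assoc]
  | add a b ha hb => rw [add_mul, ha, hb, mul_add]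

private lemma ofFn_val_eq_range_map {M : Type*} (N : ℕ) (g : ℕ → M) :
    (List.ofFn fun j : Fin N => g j) = (List.range N).map g := by
  rw [List.ofFn_eq_map, ← List.map_coe_finRange_eq_range, List.map_map]
  rfl

private lemma prod_range_pair {M : Type*} [Monoid M] (g : ℕ → M) :
    ∀ n, ((List.range (2*n)).map g).prod
      = ((List.range n).map fun j => g (2*j) * g (2*j+1)).prod := by
  intro n
  induction n with
  | zero => rfl
  | succ n ih =>
      rw [show 2*(n+1) = (2*n+1)+1 by ring, List.range_succ, List.range_succ, List.range_succ (n := n)]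
      simp only [List.map_append, List.prod_append, List.map_cons, List.map_nil,
        List.prod_cons, List.prod_nil, ih]
      simp [mul_assoc]

private lemma prod_ofFn_pair {M : Type*} [Monoid M] {n N : ℕ} (hN : N = 2*n) (g : ℕ → M) :
    (List.ofFn fun j : Fin N => g j).prod
      = (List.ofFn fun j : Fin n => g (2*(j:ℕ)) * g (2*(j:ℕ)+1)).prod := by
  subst hN
  rw [ofFn_val_eq_range_map, prod_range_pair,
    ofFn_val_eq_range_map n (fun j => g (2*j) * g (2*j+1))]

private lemma coe_prod {n : ℕ} (F : Fin n → Subalgebra.center ℝ (ExteriorAlgebra ℝ V)) :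
    ((∏ i, F i : Subalgebra.center ℝ (ExteriorAlgebra ℝ V)) : ExteriorAlgebra ℝ V)
      = (List.ofFn fun i => (F i : ExteriorAlgebra ℝ V)).prod := by
  rw [← List.prod_ofFn]
  rw [show (List.ofFn fun i => (F i : ExteriorAlgebra ℝ V))
      = (List.ofFn F).map (SubmonoidClass.subtype (Subalgebra.center ℝ (ExteriorAlgebra ℝ V)))
    from List.map_ofFn.symm]
  exact (List.prod_hom (List.ofFn F)
    (SubmonoidClass.subtype (Subalgebra.center ℝ (ExteriorAlgebra ℝ V)))).symm

private lemma prod_sub_expand {C : Type*} [CommRing C] {n : ℕ} (G H : Fin n → C) :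
    ∏ i, (G i - H i) = ∑ S ∈ (Finset.univ : Finset (Fin n)).powerset,
      ((-1 : ℤ)^(n - S.card)) • ((∏ i ∈ S, G i) * ∏ i ∈ Sᶜ, H i) := by
  have h := Finset.prod_add G (fun i => -H i) Finset.univ
  simp only [← sub_eq_add_neg] at h
  rw [h]
  refine Finset.sum_congr rfl fun S _ => ?_
  rw [show Finset.univ \ S = Sᶜ from (Finset.compl_eq_univ_sdiff S).symm]
  have : ∏ i ∈ Sᶜ, (-H i) = (-1 : C) ^ (Sᶜ.card) * ∏ i ∈ Sᶜ, H i := by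
    rw [show (fun i => -H i) = fun i => (-1 : C) * H i by funext i; ring,
      Finset.prod_mul_distrib, Finset.prod_const]
  rw [this, Finset.card_compl, Fintype.card_fin]
  rw [zsmul_eq_mul]
  push_cast
  ring

end Helpers

section Perms

variable {m k : ℕ}

private def e2 (m : ℕ) : Fin m × Fin 2 ≃ Fin (2*m) :=
  finProdFinEquiv.trans (finCongr (mul_comm m 2))

private lemma e2_apply (j : Fin m) (r : Fin 2) (h : 2*(j:ℕ) + r < 2*m) :
    e2 m (j, r) = ⟨2*(j:ℕ) + r, h⟩ := by
  apply Fin.ext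
  simp [e2, finProdFinEquiv]
  omega

private def dblPerm (π : Perm (Fin m)) : Perm (Fin (2*m)) :=
  (e2 m).permCongr (Equiv.prodCongrLeft fun _ : Fin 2 => π)

private lemma dblPerm_apply (π : Perm (Fin m)) (j : Fin m) (r : Fin 2)
    (h : 2*(j:ℕ) + r < 2*m) (h' : 2*((π j):ℕ) + r < 2*m) :
    dblPerm π ⟨2*(j:ℕ) + r, h⟩ = ⟨2*((π j):ℕ) + r, h'⟩ := by
  rw [← e2_apply j r h, dblPerm, permCongr_apply, Equiv.symm_apply_apply,
    prodCongrLeft_apply, e2_apply _ r h']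

private lemma dblPerm_apply' (π : Perm (Fin m)) (j : Fin m) (t : ℕ) (ht : t < 2)
    (h : 2*(j:ℕ) + t < 2*m) (h' : 2*((π j):ℕ) + t < 2*m) :
    dblPerm π ⟨2*(j:ℕ) + t, h⟩ = ⟨2*((π j):ℕ) + t, h'⟩ :=
  dblPerm_apply π j ⟨t, ht⟩ h h'

private lemma mul_dbl_apply {n : ℕ} (σ : Perm (Fin (2*n))) (π : Perm (Fin n)) (i : Fin n)
    (t : ℕ) (ht : t < 2) (h : 2*(i:ℕ)+t < 2*n) (h' : 2*((π.symm i):ℕ)+t < 2*n) :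
    (σ * dblPerm π.symm) ⟨2*(i:ℕ)+t, h⟩ = σ ⟨2*((π.symm i):ℕ)+t, h'⟩ := by
  rw [Equiv.Perm.mul_apply, dblPerm_apply' π.symm i t ht h h']

private lemma sign_dblPerm (π : Perm (Fin m)) : Equiv.Perm.sign (dblPerm π) = 1 := by
  rw [dblPerm, Equiv.Perm.sign_permCongr, Equiv.Perm.sign_prodCongrLeft]
  rw [Finset.prod_const]
  simp [← sq]

private lemma card_compl' (S : Finset (Fin m)) (hk : S.card = k) : Sᶜ.card = m - k := by
  rw [Finset.card_compl, hk, Fintype.card_fin]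

private def piS (S : Finset (Fin m)) (hk : S.card = k) (hkm : k ≤ m) : Perm (Fin m) :=
  ((finCongr (Nat.add_sub_cancel' hkm)).symm.trans
    (finSumFinEquiv.symm.trans
      ((Equiv.sumCongr (S.orderIsoOfFin hk).toEquiv
        (((Sᶜ).orderIsoOfFin (card_compl' S hk)).toEquiv.trans
          (Equiv.subtypeEquivRight (fun _ => Finset.mem_compl)))).trans
        (Equiv.sumCompl (· ∈ S)))))

private lemma piS_lt (S : Finset (Fin m)) (hk : S.card = k) (hkm : k ≤ m) (j : ℕ) (hj : j < k) :
    piS S hk hkm ⟨j, lt_of_lt_of_le hj hkm⟩ = (S.orderIsoOfFin hk ⟨j, hj⟩ : Fin m) := by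
  have h1 : (finCongr (Nat.add_sub_cancel' hkm)).symm ⟨j, lt_of_lt_of_le hj hkm⟩
      = Fin.castAdd (m - k) ⟨j, hj⟩ := rfl
  simp only [piS, trans_apply, h1, finSumFinEquiv_symm_apply_castAdd, sumCongr_apply,
    Sum.map_inl, sumCompl_apply_inl]
  rfl

private lemma piS_ge (S : Finset (Fin m)) (hk : S.card = k) (hkm : k ≤ m) (j : ℕ)
    (hj : j < m - k) :
    piS S hk hkm ⟨k + j, by omega⟩ = ((Sᶜ).orderIsoOfFin (card_compl' S hk) ⟨j, hj⟩ : Fin m) := by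
  have h1 : (finCongr (Nat.add_sub_cancel' hkm)).symm ⟨k + j, by omega⟩
      = Fin.natAdd k ⟨j, hj⟩ := rfl
  simp only [piS, trans_apply, h1, finSumFinEquiv_symm_apply_natAdd, sumCongr_apply,
    Sum.map_inr, sumCompl_apply_inr, subtypeEquivRight_apply]
  rfl

end Perms

section Key

variable {V : Type*} [AddCommGroup V] [Module ℝ V] {m k : ℕ}

private lemma key_lemma (Ω : Fin (2*m) → Fin (2*m) → ExteriorAlgebra ℝ V)
    (ω : Fin (2*m) → ExteriorAlgebra ℝ V)
    (hΩc : ∀ a b, Ω a b ∈ Subalgebra.center ℝ (ExteriorAlgebra ℝ V))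
    (hωc : ∀ a b, ω a * ω b ∈ Subalgebra.center ℝ (ExteriorAlgebra ℝ V))
    (S : Finset (Fin m)) (hk : S.card = k) (hkm : k ≤ m) :
    ∑ σ : Perm (Fin (2*m)), (Perm.sign σ : ℤ) •
      ((((∏ i ∈ S, (⟨Ω (σ ⟨2*(i:ℕ), by have := i.isLt; omega⟩) (σ ⟨2*(i:ℕ)+1, by have := i.isLt; omega⟩),
            hΩc _ _⟩ : Subalgebra.center ℝ (ExteriorAlgebra ℝ V))) *
        ∏ i ∈ Sᶜ, (⟨ω (σ ⟨2*(i:ℕ), by have := i.isLt; omega⟩) * ω (σ ⟨2*(i:ℕ)+1, by have := i.isLt; omega⟩),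
            hωc _ _⟩ : Subalgebra.center ℝ (ExteriorAlgebra ℝ V))) :
          Subalgebra.center ℝ (ExteriorAlgebra ℝ V)) : ExteriorAlgebra ℝ V)
    = ∑ σ : Perm (Fin (2*m)), (Perm.sign σ : ℤ) •
      ((List.ofFn fun i : Fin k =>
          Ω (σ ⟨2*(i:ℕ), by have := i.isLt; omega⟩) (σ ⟨2*(i:ℕ)+1, by have := i.isLt; omega⟩)).prod *
       (List.ofFn fun j : Fin (2*m - 2*k) =>
          ω (σ ⟨2*k + (j:ℕ), by have := j.isLt; omega⟩)).prod) := by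
  have hmm : m ≤ m := le_rfl
  set Z := Subalgebra.center ℝ (ExteriorAlgebra ℝ V) with hZ
  set π : Perm (Fin m) := piS S hk hkm with hπ
  set τ : Perm (Fin (2*m)) := dblPerm π.symm with hτ
  have hτs : Equiv.Perm.sign τ = 1 := sign_dblPerm _
  refine (Fintype.sum_equiv (Equiv.mulRight τ) _ _ fun σ => ?_).symm
  simp only [Equiv.coe_mulRight]
  rw [map_mul, hτs, mul_one]
  congr 1
  have hP : (∏ i ∈ S, (⟨Ω ((σ * τ) ⟨2*(i:ℕ), by have := i.isLt; omega⟩)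
          ((σ * τ) ⟨2*(i:ℕ)+1, by have := i.isLt; omega⟩), hΩc _ _⟩ : Z))
      = ∏ j : Fin k, (⟨Ω (σ ⟨2*(j:ℕ), by have := j.isLt; omega⟩)
          (σ ⟨2*(j:ℕ)+1, by have := j.isLt; omega⟩), hΩc _ _⟩ : Z) := by
    rw [← Finset.prod_coe_sort S]
    rw [← Equiv.prod_comp (S.orderIsoOfFin hk).toEquiv]
    refine Finset.prod_congr rfl fun j _ => ?_
    have hjk : (j:ℕ) < k := j.isLt
    have hmem : ((S.orderIsoOfFin hk).toEquiv j : Fin m) = π ⟨(j:ℕ), by omega⟩ := by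
      rw [hπ, piS_lt S hk hkm (j:ℕ) hjk]
      rfl
    have hv : ((π.symm ((S.orderIsoOfFin hk).toEquiv j : Fin m)) : ℕ) = (j:ℕ) := by
      rw [hmem, Equiv.symm_apply_apply]
    apply Subtype.ext
    show Ω _ _ = Ω _ _
    have e0 : (σ * τ) ⟨2 * (((S.orderIsoOfFin hk).toEquiv j : Fin m) : ℕ),
        by have := ((S.orderIsoOfFin hk).toEquiv j : Fin m).isLt; omega⟩
        = σ ⟨2*(j:ℕ), by omega⟩ := by
      refine (mul_dbl_apply σ π ((S.orderIsoOfFin hk).toEquiv j : Fin m) 0 (by omega)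
        (by have := ((S.orderIsoOfFin hk).toEquiv j : Fin m).isLt; omega)
        (by have := (π.symm ((S.orderIsoOfFin hk).toEquiv j : Fin m)).isLt; omega)).trans
        (congrArg σ (Fin.ext ?_))
      show 2*((π.symm ((S.orderIsoOfFin hk).toEquiv j : Fin m)):ℕ)+0 = 2*(j:ℕ)
      omega
    have e1 : (σ * τ) ⟨2 * (((S.orderIsoOfFin hk).toEquiv j : Fin m) : ℕ) + 1,
        by have := ((S.orderIsoOfFin hk).toEquiv j : Fin m).isLt; omega⟩
        = σ ⟨2*(j:ℕ)+1, by omega⟩ := by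
      refine (mul_dbl_apply σ π ((S.orderIsoOfFin hk).toEquiv j : Fin m) 1 (by omega)
        (by have := ((S.orderIsoOfFin hk).toEquiv j : Fin m).isLt; omega)
        (by have := (π.symm ((S.orderIsoOfFin hk).toEquiv j : Fin m)).isLt; omega)).trans
        (congrArg σ (Fin.ext ?_))
      show 2*((π.symm ((S.orderIsoOfFin hk).toEquiv j : Fin m)):ℕ)+1 = 2*(j:ℕ)+1
      omega
    rw [e0, e1]
  have hQ : (∏ i ∈ Sᶜ, (⟨ω ((σ * τ) ⟨2*(i:ℕ), by have := i.isLt; omega⟩) *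
          ω ((σ * τ) ⟨2*(i:ℕ)+1, by have := i.isLt; omega⟩), hωc _ _⟩ : Z))
      = ∏ j : Fin (m-k), (⟨ω (σ ⟨2*k + 2*(j:ℕ), by have := j.isLt; omega⟩) *
          ω (σ ⟨2*k + (2*(j:ℕ)+1), by have := j.isLt; omega⟩), hωc _ _⟩ : Z) := by
    rw [← Finset.prod_coe_sort (Sᶜ)]
    rw [← Equiv.prod_comp ((Sᶜ).orderIsoOfFin (card_compl' S hk)).toEquiv]
    refine Finset.prod_congr rfl fun j _ => ?_
    have hjk : (j:ℕ) < m - k := j.isLt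
    have hmem : (((Sᶜ).orderIsoOfFin (card_compl' S hk)).toEquiv j : Fin m)
        = π ⟨k + (j:ℕ), by omega⟩ := by
      rw [hπ, piS_ge S hk hkm (j:ℕ) hjk]
      rfl
    have hv : ((π.symm ((((Sᶜ).orderIsoOfFin (card_compl' S hk)).toEquiv j : Fin m))) : ℕ)
        = k + (j:ℕ) := by
      rw [hmem, Equiv.symm_apply_apply]
    apply Subtype.ext
    show ω _ * ω _ = ω _ * ω _
    have e0 : (σ * τ) ⟨2 * ((((Sᶜ).orderIsoOfFin (card_compl' S hk)).toEquiv j : Fin m) : ℕ),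
        by have := ((((Sᶜ).orderIsoOfFin (card_compl' S hk)).toEquiv j : Fin m)).isLt; omega⟩
        = σ ⟨2*k + 2*(j:ℕ), by omega⟩ := by
      refine (mul_dbl_apply σ π ((((Sᶜ).orderIsoOfFin (card_compl' S hk)).toEquiv j : Fin m)) 0
        (by omega)
        (by have := ((((Sᶜ).orderIsoOfFin (card_compl' S hk)).toEquiv j : Fin m)).isLt; omega)
        (by have := (π.symm ((((Sᶜ).orderIsoOfFin (card_compl' S hk)).toEquiv j : Fin m))).isLt;
            omega)).trans (congrArg σ (Fin.ext ?_))
      show 2*((π.symm ((((Sᶜ).orderIsoOfFin (card_compl' S hk)).toEquiv j : Fin m))):ℕ)+0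
        = 2*k + 2*(j:ℕ)
      omega
    have e1 : (σ * τ) ⟨2 * ((((Sᶜ).orderIsoOfFin (card_compl' S hk)).toEquiv j : Fin m) : ℕ) + 1,
        by have := ((((Sᶜ).orderIsoOfFin (card_compl' S hk)).toEquiv j : Fin m)).isLt; omega⟩
        = σ ⟨2*k + (2*(j:ℕ)+1), by omega⟩ := by
      refine (mul_dbl_apply σ π ((((Sᶜ).orderIsoOfFin (card_compl' S hk)).toEquiv j : Fin m)) 1
        (by omega)
        (by have := ((((Sᶜ).orderIsoOfFin (card_compl' S hk)).toEquiv j : Fin m)).isLt; omega)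
        (by have := (π.symm ((((Sᶜ).orderIsoOfFin (card_compl' S hk)).toEquiv j : Fin m))).isLt;
            omega)).trans (congrArg σ (Fin.ext ?_))
      show 2*((π.symm ((((Sᶜ).orderIsoOfFin (card_compl' S hk)).toEquiv j : Fin m))):ℕ)+1
        = 2*k + (2*(j:ℕ)+1)
      omega
    rw [e0, e1]
  rw [hP, hQ, MulMemClass.coe_mul, coe_prod, coe_prod]
  congr 1
  set g : ℕ → ExteriorAlgebra ℝ V :=
    fun t => if h : 2*k + t < 2*m then ω (σ ⟨2*k+t, h⟩) else 1 with hg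
  have h1 : (List.ofFn fun j : Fin (2*m - 2*k) =>
      ω (σ ⟨2*k + (j:ℕ), by have := j.isLt; omega⟩))
      = List.ofFn fun j : Fin (2*m-2*k) => g (j:ℕ) := by
    refine congrArg List.ofFn (funext fun j => ?_)
    simp only [hg]
    rw [dif_pos (show 2*k + (j:ℕ) < 2*m by have := j.isLt; omega)]
  rw [h1, prod_ofFn_pair (show 2*m - 2*k = 2*(m-k) by omega) g]
  refine congrArg List.prod (congrArg List.ofFn (funext fun j => ?_))
  simp only [hg]
  rw [dif_pos (show 2*k + 2*(j:ℕ) < 2*m by have := j.isLt; omega),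
    dif_pos (show 2*k + (2*(j:ℕ)+1) < 2*m by have := j.isLt; omega)]

end Key


/-- The multinomial-expansion identity underlying Chern's Gauss equation computation: for
even-degree elements `Ω_{αβ}` and odd-degree elements `ω_α` (`1 ≤ α,β ≤ 2m`) of the
exterior algebra of a real vector space,
`Σ_σ ε(σ)(Ω_{σ₁σ₂} − ω_{σ₁}ω_{σ₂})···(Ω_{σ_{2m-1}σ_{2m}} − ω_{σ_{2m-1}}ω_{σ_{2m}})
 = Σ_{k=0}^m C(m,k)(−1)^{m−k} Σ_σ ε(σ) Ω_{σ₁σ₂}···Ω_{σ_{2k-1}σ_{2k}} ω_{σ_{2k+1}}···ω_{σ_{2m}}`. -/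
theorem gauss_equation_multinomial (m : ℕ) {V : Type*} [AddCommGroup V] [Module ℝ V]
    (Ω : Fin (2 * m) → Fin (2 * m) → ExteriorAlgebra ℝ V)
    (ω : Fin (2 * m) → ExteriorAlgebra ℝ V)
    (hΩ : ∀ a b, ∃ p : ℕ, Even p ∧ Ω a b ∈ ⋀[ℝ]^p V)
    (hω : ∀ a, ∃ p : ℕ, Odd p ∧ ω a ∈ ⋀[ℝ]^p V) :
    ∑ σ : Perm (Fin (2 * m)), (Perm.sign σ : ℤ) •
      (List.ofFn fun i : Fin m =>
        Ω (σ ⟨2 * i, by have := i.isLt; omega⟩) (σ ⟨2 * i + 1, by have := i.isLt; omega⟩) -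
          ω (σ ⟨2 * i, by have := i.isLt; omega⟩) *
            ω (σ ⟨2 * i + 1, by have := i.isLt; omega⟩)).prod =
    ∑ k : Fin (m + 1), ((m.choose k : ℤ) * (-1) ^ (m - (k : ℕ))) •
      ∑ σ : Perm (Fin (2 * m)), (Perm.sign σ : ℤ) •
        ((List.ofFn fun i : Fin (k : ℕ) =>
            Ω (σ ⟨2 * i, by have := i.isLt; have := k.isLt; omega⟩)
              (σ ⟨2 * i + 1, by have := i.isLt; have := k.isLt; omega⟩)).prod *
          (List.ofFn fun j : Fin (2 * m - 2 * (k : ℕ)) =>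
            ω (σ ⟨2 * (k : ℕ) + j, by have := j.isLt; have := k.isLt; omega⟩)).prod) := by
  classical
  have hΩc : ∀ a b, Ω a b ∈ Subalgebra.center ℝ (ExteriorAlgebra ℝ V) := by
    intro a b
    obtain ⟨p, hp, hm⟩ := hΩ a b
    exact even_mem_center hp hm
  have hωc : ∀ a b, ω a * ω b ∈ Subalgebra.center ℝ (ExteriorAlgebra ℝ V) := by
    intro a b
    obtain ⟨p, hp, hxm⟩ := hω a
    obtain ⟨q, hq, hym⟩ := hω b
    refine even_mem_center (p := p + q) (hp.add_odd hq) ?_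
    have hpq : (⋀[ℝ]^(p+q) V : Submodule ℝ (ExteriorAlgebra ℝ V)) = ⋀[ℝ]^p V * ⋀[ℝ]^q V :=
      pow_add _ p q
    rw [hpq]
    exact Submodule.mul_mem_mul hxm hym
  -- the common value for each cardinality
  set F : ℕ → ExteriorAlgebra ℝ V := fun n =>
    if h : n ≤ m then
      ((-1 : ℤ)^(m - n)) • ∑ σ : Perm (Fin (2*m)), (Perm.sign σ : ℤ) •
        ((List.ofFn fun i : Fin n =>
            Ω (σ ⟨2*(i:ℕ), by have := i.isLt; omega⟩)
              (σ ⟨2*(i:ℕ)+1, by have := i.isLt; omega⟩)).prod *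
         (List.ofFn fun j : Fin (2*m - 2*n) =>
            ω (σ ⟨2*n + (j:ℕ), by have := j.isLt; omega⟩)).prod)
    else 0 with hF
  have step1 : ∀ σ : Perm (Fin (2 * m)),
      (List.ofFn fun i : Fin m =>
        Ω (σ ⟨2 * i, by have := i.isLt; omega⟩) (σ ⟨2 * i + 1, by have := i.isLt; omega⟩) -
          ω (σ ⟨2 * i, by have := i.isLt; omega⟩) *
            ω (σ ⟨2 * i + 1, by have := i.isLt; omega⟩)).prod
      = ∑ S ∈ (Finset.univ : Finset (Fin m)).powerset, ((-1 : ℤ)^(m - S.card)) •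
          ((((∏ i ∈ S, (⟨Ω (σ ⟨2*(i:ℕ), by have := i.isLt; omega⟩)
              (σ ⟨2*(i:ℕ)+1, by have := i.isLt; omega⟩), hΩc _ _⟩ :
                Subalgebra.center ℝ (ExteriorAlgebra ℝ V))) *
            ∏ i ∈ Sᶜ, (⟨ω (σ ⟨2*(i:ℕ), by have := i.isLt; omega⟩) *
              ω (σ ⟨2*(i:ℕ)+1, by have := i.isLt; omega⟩), hωc _ _⟩ :
                Subalgebra.center ℝ (ExteriorAlgebra ℝ V))) :
              Subalgebra.center ℝ (ExteriorAlgebra ℝ V)) : ExteriorAlgebra ℝ V) := by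
    intro σ
    have eL : (List.ofFn fun i : Fin m =>
        Ω (σ ⟨2 * i, by have := i.isLt; omega⟩) (σ ⟨2 * i + 1, by have := i.isLt; omega⟩) -
          ω (σ ⟨2 * i, by have := i.isLt; omega⟩) *
            ω (σ ⟨2 * i + 1, by have := i.isLt; omega⟩))
        = List.ofFn fun i : Fin m =>
          ((((⟨Ω (σ ⟨2*(i:ℕ), by have := i.isLt; omega⟩)
              (σ ⟨2*(i:ℕ)+1, by have := i.isLt; omega⟩), hΩc _ _⟩ :
                Subalgebra.center ℝ (ExteriorAlgebra ℝ V))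
            - (⟨ω (σ ⟨2*(i:ℕ), by have := i.isLt; omega⟩) *
              ω (σ ⟨2*(i:ℕ)+1, by have := i.isLt; omega⟩), hωc _ _⟩ :
                Subalgebra.center ℝ (ExteriorAlgebra ℝ V))) :
              Subalgebra.center ℝ (ExteriorAlgebra ℝ V)) : ExteriorAlgebra ℝ V) := by
      refine congrArg List.ofFn (funext fun i => ?_)
      rw [AddSubgroupClass.coe_sub]
    rw [eL, ← coe_prod]
    erw [prod_sub_expand]
    rw [AddSubmonoidClass.coe_finset_sum]
    exact Finset.sum_congr rfl fun S _ => AddSubgroupClass.coe_zsmul _ _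
  calc
    ∑ σ : Perm (Fin (2 * m)), (Perm.sign σ : ℤ) •
      (List.ofFn fun i : Fin m =>
        Ω (σ ⟨2 * i, by have := i.isLt; omega⟩) (σ ⟨2 * i + 1, by have := i.isLt; omega⟩) -
          ω (σ ⟨2 * i, by have := i.isLt; omega⟩) *
            ω (σ ⟨2 * i + 1, by have := i.isLt; omega⟩)).prod
      = ∑ σ : Perm (Fin (2 * m)), ∑ S ∈ (Finset.univ : Finset (Fin m)).powerset,
          (Perm.sign σ : ℤ) • (((-1 : ℤ)^(m - S.card)) •
          ((((∏ i ∈ S, (⟨Ω (σ ⟨2*(i:ℕ), by have := i.isLt; omega⟩)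
              (σ ⟨2*(i:ℕ)+1, by have := i.isLt; omega⟩), hΩc _ _⟩ :
                Subalgebra.center ℝ (ExteriorAlgebra ℝ V))) *
            ∏ i ∈ Sᶜ, (⟨ω (σ ⟨2*(i:ℕ), by have := i.isLt; omega⟩) *
              ω (σ ⟨2*(i:ℕ)+1, by have := i.isLt; omega⟩), hωc _ _⟩ :
                Subalgebra.center ℝ (ExteriorAlgebra ℝ V))) :
              Subalgebra.center ℝ (ExteriorAlgebra ℝ V)) : ExteriorAlgebra ℝ V)) := by
        refine Finset.sum_congr rfl fun σ _ => ?_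
        rw [step1 σ, Finset.smul_sum]
    _ = ∑ S ∈ (Finset.univ : Finset (Fin m)).powerset, ((-1 : ℤ)^(m - S.card)) •
          ∑ σ : Perm (Fin (2 * m)), (Perm.sign σ : ℤ) •
          ((((∏ i ∈ S, (⟨Ω (σ ⟨2*(i:ℕ), by have := i.isLt; omega⟩)
              (σ ⟨2*(i:ℕ)+1, by have := i.isLt; omega⟩), hΩc _ _⟩ :
                Subalgebra.center ℝ (ExteriorAlgebra ℝ V))) *
            ∏ i ∈ Sᶜ, (⟨ω (σ ⟨2*(i:ℕ), by have := i.isLt; omega⟩) *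
              ω (σ ⟨2*(i:ℕ)+1, by have := i.isLt; omega⟩), hωc _ _⟩ :
                Subalgebra.center ℝ (ExteriorAlgebra ℝ V))) :
              Subalgebra.center ℝ (ExteriorAlgebra ℝ V)) : ExteriorAlgebra ℝ V) := by
        rw [Finset.sum_comm]
        refine Finset.sum_congr rfl fun S _ => ?_
        rw [Finset.smul_sum]
        exact Finset.sum_congr rfl fun σ _ => smul_comm _ _ _
    _ = ∑ S ∈ (Finset.univ : Finset (Fin m)).powerset, F S.card := by
        refine Finset.sum_congr rfl fun S _ => ?_
        have hcard : S.card ≤ m := by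
          have := Finset.card_le_univ S
          simpa [Finset.card_univ] using this
        rw [key_lemma Ω ω hΩc hωc S rfl hcard]
        simp only [hF]
        rw [dif_pos hcard]
    _ = ∑ j ∈ Finset.range (m + 1), ∑ S ∈ Finset.powersetCard j (Finset.univ : Finset (Fin m)),
          F S.card := by
        rw [Finset.sum_powerset]
        rw [Finset.card_univ, Fintype.card_fin]
    _ = ∑ j ∈ Finset.range (m + 1), (m.choose j) • F j := by
        refine Finset.sum_congr rfl fun j _ => ?_
        have hcc : ∀ S ∈ Finset.powersetCard j (Finset.univ : Finset (Fin m)),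
            F S.card = F j := by
          intro S hS
          rw [(Finset.mem_powersetCard.mp hS).2]
        rw [Finset.sum_congr rfl hcc, Finset.sum_const, Finset.card_powersetCard,
          Finset.card_univ, Fintype.card_fin]
    _ = ∑ k : Fin (m + 1), ((m.choose k : ℤ) * (-1) ^ (m - (k : ℕ))) •
      ∑ σ : Perm (Fin (2 * m)), (Perm.sign σ : ℤ) •
        ((List.ofFn fun i : Fin (k : ℕ) =>
            Ω (σ ⟨2 * i, by have := i.isLt; have := k.isLt; omega⟩)
              (σ ⟨2 * i + 1, by have := i.isLt; have := k.isLt; omega⟩)).prod *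
          (List.ofFn fun j : Fin (2 * m - 2 * (k : ℕ)) =>
            ω (σ ⟨2 * (k : ℕ) + j, by have := j.isLt; have := k.isLt; omega⟩)).prod) := by
        rw [← Fin.sum_univ_eq_sum_range (fun j => (m.choose j) • F j) (m+1)]
        refine Finset.sum_congr rfl fun k _ => ?_
        have hkm : (k : ℕ) ≤ m := by omega
        simp only [hF]
        rw [dif_pos hkm, mul_smul, natCast_zsmul]
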